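/- Fix t ∈ [0,1], n ≥ 3, 3 ≤ k ≤ n, and h > 0. For η ∈ ℝⁿ with tη + (1−t)(tr η)e ∈ Γ_{k−1}, the operator G(η) = σ_k(tη+(1−t)(tr η)e)/σ_{k−1}(tη+(1−t)(tr η)e) − h/σ_{k−1}(tη+(1−t)(tr η)e) satisfies ∂G/∂η_j > 0 for every j (ellipticity). -/

import Mathlib

open Finset

/-- The k-th elementary symmetric polynomial of x : Fin n -> R. -/
noncomputable def esymm (n k : ℕ) (x : Fin n → ℝ) : ℝ :=
  ∑ s ∈ Finset.univ.powersetCard k, ∏ i ∈ s, x i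

/-- The Garding cone Gamma_k. -/
def Gamma (n k : ℕ) : Set (Fin n → ℝ) :=
  {x | ∀ j, 1 ≤ j → j ≤ k → 0 < esymm n j x}

/-- Partial derivative of f in the i-th coordinate direction at mu. -/
noncomputable def pdv (n : ℕ) (i : Fin n) (f : (Fin n → ℝ) → ℝ) (μ : Fin n → ℝ) : ℝ :=
  deriv (fun s => f (Function.update μ i s)) (μ i)

namespace NewtonAux

open Polynomial

def RR (p : ℝ[X]) : Prop := Multiset.card p.roots = p.natDegree

lemma RR_zero : RR 0 := by simp [RR]

lemma RR.derivative {p : ℝ[X]} (hp : RR p) : RR (Polynomial.derivative p) := by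
  rcases eq_or_ne p.natDegree 0 with h0 | h0
  · rw [p.eq_C_of_natDegree_eq_zero h0]
    simp [RR]
  · have h1 : (Polynomial.derivative p).natDegree < p.natDegree :=
      natDegree_derivative_lt h0
    have h2 := p.card_roots_le_derivative
    have h3 := (Polynomial.derivative p).card_roots'
    unfold RR at *
    omega

lemma RR.iterate {p : ℝ[X]} (hp : RR p) (m : ℕ) : RR (Polynomial.derivative^[m] p) := by
  induction m with
  | zero => simpa
  | succ m ih => rw [Function.iterate_succ_apply']; exact ih.derivative

lemma RR.mul {p q : ℝ[X]} (hp : RR p) (hq : RR q) : RR (p * q) := by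
  rcases eq_or_ne p 0 with rfl | hp0
  · simpa [RR] using RR_zero
  rcases eq_or_ne q 0 with rfl | hq0
  · simpa [RR] using RR_zero
  unfold RR at *
  rw [Polynomial.roots_mul (mul_ne_zero hp0 hq0), Polynomial.natDegree_mul hp0 hq0,
    Multiset.card_add, hp, hq]

lemma reverse_X_sub_C (r : ℝ) : (X - C r).reverse = C (-r) * X + 1 := by
  ext n
  rw [Polynomial.coeff_reverse, natDegree_X_sub_C]
  match n with
  | 0 => rw [Polynomial.revAt_le (by norm_num)]; simp
  | 1 => rw [Polynomial.revAt_le (by norm_num)]; simp [Polynomial.coeff_one]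
  | (n+2) =>
      rw [Polynomial.revAt_eq_self_of_lt (by omega)]
      simp [Polynomial.coeff_one, coeff_C, coeff_X]

lemma RR_reverse_X_sub_C (r : ℝ) : RR (X - C r).reverse := by
  rw [reverse_X_sub_C]
  rcases eq_or_ne r 0 with rfl | hr
  · simp [RR]
  · have hco : C (-r) * X + 1 = C (-r) * (X - C r⁻¹) := by
      rw [mul_sub, ← C_mul]
      rw [show -r * r⁻¹ = -1 by field_simp]
      simp
    rw [hco]
    unfold RR
    rw [Polynomial.roots_C_mul _ (by simpa using hr), Polynomial.natDegree_C_mul (by simpa using hr),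
      roots_X_sub_C, natDegree_X_sub_C]
    simp

lemma RR_reverse_aux (a : ℝ) (M : Multiset ℝ) :
    RR (C a * (M.map fun r => X - C r).prod).reverse := by
  induction M using Multiset.induction with
  | empty => simp [RR, Polynomial.reverse, Polynomial.natDegree_C]
  | cons r M ih =>
      have hre : C a * ((r ::ₘ M).map fun r => X - C r).prod
           = (X - C r) * (C a * (M.map fun r => X - C r).prod) := by
        rw [Multiset.map_cons, Multiset.prod_cons]; ring
      rw [hre, Polynomial.reverse_mul_of_domain]
      exact (RR_reverse_X_sub_C r).mul ih

lemma RR.reverse {p : ℝ[X]} (hp : RR p) : RR p.reverse := by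
  rcases eq_or_ne p 0 with rfl | hp0
  · simp [RR, Polynomial.reverse]
  · have hfact := Polynomial.C_leadingCoeff_mul_prod_multiset_X_sub_C (p := p) hp
    rw [← hfact]
    exact RR_reverse_aux _ _

lemma RR.quad {p : ℝ[X]} (hp : RR p) (hd : p.natDegree ≤ 2) :
    4 * (p.coeff 2 * p.coeff 0) ≤ p.coeff 1 ^ 2 := by
  rcases eq_or_ne (p.coeff 2) 0 with h2 | h2
  · rw [h2]
    simp
    positivity
  · have hdeg : p.natDegree = 2 := le_antisymm hd (le_natDegree_of_ne_zero h2)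
    have hcard : Multiset.card p.roots = 2 := by rw [hp, hdeg]
    obtain ⟨r₁, r₂, hr⟩ := Multiset.card_eq_two.mp hcard
    have hfact := Polynomial.C_leadingCoeff_mul_prod_multiset_X_sub_C (p := p) hp
    rw [hr] at hfact
    have hlc : p.leadingCoeff = p.coeff 2 := by rw [Polynomial.leadingCoeff, hdeg]
    have hprod : (({r₁, r₂} : Multiset ℝ).map fun a => X - C a).prod
        = X ^ 2 - C (r₁ + r₂) * X + C (r₁ * r₂) := by
      rw [show ({r₁, r₂} : Multiset ℝ) = r₁ ::ₘ {r₂} from rfl]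
      rw [Multiset.map_cons, Multiset.prod_cons, Multiset.map_singleton, Multiset.prod_singleton]
      rw [map_add C, map_mul C]
      ring
    have hexp : p = C (p.coeff 2) * (X ^ 2 - C (r₁ + r₂) * X + C (r₁ * r₂)) := by
      rw [← hlc, ← hprod]
      exact hfact.symm
    have c0 : p.coeff 0 = p.coeff 2 * (r₁ * r₂) := by
      conv_lhs => rw [hexp]
      simp [coeff_X_pow, coeff_one]
    have c1 : p.coeff 1 = p.coeff 2 * (-(r₁ + r₂)) := by
      conv_lhs => rw [hexp]
      simp [coeff_X_pow, coeff_one]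
    rw [c0, c1]
    nlinarith [sq_nonneg (p.coeff 2 * (r₁ - r₂))]

lemma two_mul_choose_two (m : ℕ) : 2 * m.choose 2 = m * (m - 1) := by
  induction m with
  | zero => rfl
  | succ e ih =>
      rw [Nat.choose_succ_succ, Nat.mul_add, ih]
      rcases e with _ | e
      · rfl
      · simp [Nat.choose_one_right]
        ring

lemma descFactorial_ineq (k d : ℕ) (hk : 1 ≤ k) :
    (k.descFactorial (k-1) * (1+d).descFactorial d)^2
      ≤ 4 * ((k+1).descFactorial (k-1) * d.descFactorial d)
          * ((k-1).descFactorial (k-1) * (2+d).descFactorial d) := by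
  obtain ⟨e, rfl⟩ : ∃ e, k = e + 1 := ⟨k-1, by omega⟩
  simp only [Nat.add_sub_cancel]
  rw [Nat.descFactorial_eq_factorial_mul_choose (e+1) e,
    Nat.descFactorial_eq_factorial_mul_choose (1+d) d,
    Nat.descFactorial_eq_factorial_mul_choose (e+1+1) e,
    Nat.descFactorial_eq_factorial_mul_choose d d,
    Nat.descFactorial_eq_factorial_mul_choose e e,
    Nat.descFactorial_eq_factorial_mul_choose (2+d) d]
  rw [Nat.choose_self, Nat.choose_self, Nat.choose_succ_self_right]
  rw [show 1 + d = d + 1 from by omega, Nat.choose_succ_self_right]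
  have hc1 : (e+1+1).choose e = (e+2).choose 2 := by
    rw [show e+1+1 = e+2 from rfl, ← Nat.choose_symm (by omega : 2 ≤ e+2)]
    congr 1
  have hc2 : (2+d).choose d = (d+2).choose 2 := by
    rw [show 2+d = d+2 from by omega, ← Nat.choose_symm (by omega : 2 ≤ d+2)]
    congr 1
  rw [hc1, hc2]
  have h1 : (e+2)*(e+1) = 2 * (e+2).choose 2 := by
    rw [two_mul_choose_two]
    congr 1
  have h2 : (d+2)*(d+1) = 2 * (d+2).choose 2 := by
    rw [two_mul_choose_two]
    congr 1
  have key : (e+1)*(d+1) ≤ (e+2)*(d+2) := Nat.mul_le_mul (by omega) (by omega)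
  calc (e.factorial * (e + 1) * (d.factorial * (d + 1))) ^ 2
      = e.factorial^2 * d.factorial^2 * (((e+1)*(d+1)) * ((e+1)*(d+1))) := by ring
    _ ≤ e.factorial^2 * d.factorial^2 * (((e+1)*(d+1)) * ((e+2)*(d+2))) :=
        Nat.mul_le_mul_left _ (Nat.mul_le_mul_left _ key)
    _ = e.factorial^2 * d.factorial^2 * (((e+2)*(e+1)) * ((d+2)*(d+1))) := by ring
    _ = 4 * (e.factorial * (e + 2).choose 2 * (d.factorial * 1))
          * (e.factorial * 1 * (d.factorial * (d + 2).choose 2)) := by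
        rw [h1, h2]; ring

lemma esymm_zero_of_lt {M : Multiset ℝ} {j : ℕ} (h : Multiset.card M < j) : M.esymm j = 0 := by
  rw [Multiset.esymm, Multiset.powersetCard_eq_empty _ h]
  rfl

theorem multiset_newton (M : Multiset ℝ) (k : ℕ) (hk : 1 ≤ k) :
    M.esymm (k+1) * M.esymm (k-1) ≤ M.esymm k ^ 2 := by
  by_cases hkm : k + 1 ≤ Multiset.card M
  case neg =>
    rw [esymm_zero_of_lt (by omega)]
    rw [zero_mul]
    positivity
  set m := Multiset.card M with hm
  set d := m - (k+1) with hd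
  set P := (M.map fun r => X + C r).prod with hP
  have hmonic : P.Monic := monic_multiset_prod_of_monic _ _ fun r _ => monic_X_add_C r
  have hdegP : P.natDegree = m := by
    rw [hP, natDegree_multiset_prod_of_monic]
    · simp [Multiset.map_map, Function.comp_def, natDegree_X_add_C, hm]
    · intro f hf
      obtain ⟨r, _, rfl⟩ := Multiset.mem_map.mp hf
      exact monic_X_add_C r
  have hroots : P.roots = M.map Neg.neg := by
    have he : M.map (fun r => X + C r) = (M.map Neg.neg).map (fun a => X - C a) := by
      rw [Multiset.map_map]
      apply Multiset.map_congr rfl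
      intro r _
      simp [sub_neg_eq_add]
    rw [hP, he, roots_multiset_prod_X_sub_C]
  have hRRP : RR P := by
    unfold RR
    rw [hroots, hdegP, Multiset.card_map]
  have hcoeffP : ∀ j, j ≤ m → P.coeff j = M.esymm (m - j) :=
    fun j hj => Multiset.prod_X_add_C_coeff M hj
  set Q := Polynomial.derivative^[d] P with hQ
  have hQcoeff : ∀ j, Q.coeff j = ((j + d).descFactorial d : ℝ) * P.coeff (j + d) := by
    intro j
    rw [hQ, Polynomial.coeff_iterate_derivative, nsmul_eq_mul]
  have hQdeg : Q.natDegree = k + 1 := by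
    have h1 : Q.natDegree ≤ k + 1 := by
      have h := Polynomial.natDegree_iterate_derivative P d
      rw [← hQ, hdegP] at h
      omega
    have h2 : Q.coeff (k+1) ≠ 0 := by
      rw [hQcoeff]
      have hsum : k + 1 + d = m := by omega
      rw [hsum]
      have hPm : P.coeff m = 1 := by
        rw [← hdegP]
        exact hmonic.coeff_natDegree
      rw [hPm, mul_one]
      have : m.descFactorial d ≠ 0 := by
        rw [Ne, Nat.descFactorial_eq_zero_iff_lt]
        omega
      exact_mod_cast this
    exact le_antisymm h1 (le_natDegree_of_ne_zero h2)
  have hRRQ : RR Q := hRRP.iterate d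
  set R := Q.reverse with hR
  have hRcoeff : ∀ j, j ≤ k + 1 → R.coeff j = Q.coeff (k + 1 - j) := by
    intro j hj
    rw [hR, Polynomial.coeff_reverse, hQdeg, Polynomial.revAt_le hj]
  have hRRR : RR R := hRRQ.reverse
  set S := Polynomial.derivative^[k-1] R with hS
  have hRRS : RR S := hRRR.iterate _
  have hSdeg : S.natDegree ≤ 2 := by
    have h1 := Polynomial.natDegree_iterate_derivative R (k-1)
    rw [← hS] at h1
    have h2 : R.natDegree ≤ k + 1 := hQdeg ▸ Q.reverse_natDegree_le
    omega
  have hScoeff : ∀ j, S.coeff j = ((j + (k-1)).descFactorial (k-1) : ℝ) * R.coeff (j + (k-1)) := by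
    intro j
    rw [hS, Polynomial.coeff_iterate_derivative, nsmul_eq_mul]
  have key := hRRS.quad hSdeg
  have e0 : S.coeff 0 = ((k-1).descFactorial (k-1) * (2 + d).descFactorial d : ℕ) * M.esymm (k-1) := by
    rw [hScoeff, show 0 + (k-1) = k - 1 from by omega, hRcoeff _ (by omega),
      show k + 1 - (k-1) = 2 from by omega, hQcoeff, hcoeffP (2 + d) (by omega),
      show m - (2 + d) = k - 1 from by omega]
    push_cast
    ring
  have e1 : S.coeff 1 = (k.descFactorial (k-1) * (1 + d).descFactorial d : ℕ) * M.esymm k := by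
    rw [hScoeff, show 1 + (k-1) = k from by omega, hRcoeff _ (by omega),
      show k + 1 - k = 1 from by omega, hQcoeff, hcoeffP (1 + d) (by omega),
      show m - (1 + d) = k from by omega]
    push_cast
    ring
  have e2 : S.coeff 2 = ((k+1).descFactorial (k-1) * d.descFactorial d : ℕ) * M.esymm (k+1) := by
    rw [hScoeff, show 2 + (k-1) = k + 1 from by omega, hRcoeff _ (by omega),
      show k + 1 - (k+1) = 0 from by omega, hQcoeff, show 0 + d = d from by omega,
      hcoeffP d (by omega), show m - d = k + 1 from by omega]
    push_cast
    ring
  rw [e0, e1, e2] at key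
  set A : ℕ := (k+1).descFactorial (k-1) * d.descFactorial d with hA
  set B : ℕ := k.descFactorial (k-1) * (1 + d).descFactorial d with hB
  set C' : ℕ := (k-1).descFactorial (k-1) * (2 + d).descFactorial d with hC
  have hnat : (B:ℝ)^2 ≤ 4 * A * C' := by
    exact_mod_cast descFactorial_ineq k d hk
  have hBpos : 0 < (B:ℝ) := by
    have : B ≠ 0 := by
      rw [hB]
      apply Nat.mul_ne_zero <;> (rw [Ne, Nat.descFactorial_eq_zero_iff_lt]; omega)
    positivity
  by_cases hsign : 0 ≤ M.esymm (k+1) * M.esymm (k-1)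
  · have h1 : (B:ℝ)^2 * (M.esymm (k+1) * M.esymm (k-1))
        ≤ (4 * A * C') * (M.esymm (k+1) * M.esymm (k-1)) :=
      mul_le_mul_of_nonneg_right hnat hsign
    have h2 : (4 * (A:ℝ) * C') * (M.esymm (k+1) * M.esymm (k-1)) ≤ (B:ℝ)^2 * M.esymm k ^2 := by
      nlinarith [key]
    have := h1.trans h2
    have hB2 : 0 < (B:ℝ)^2 := by positivity
    nlinarith
  · push_neg at hsign
    nlinarith [sq_nonneg (M.esymm k)]

noncomputable def esOn {n : ℕ} (s : Finset (Fin n)) (m : ℕ) (x : Fin n → ℝ) : ℝ :=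
  ∑ T ∈ s.powersetCard m, ∏ i ∈ T, x i

lemma esymm_eq_esOn (n m : ℕ) (x : Fin n → ℝ) : esymm n m x = esOn univ m x := rfl

lemma esOn_zero {n : ℕ} (s : Finset (Fin n)) (x : Fin n → ℝ) : esOn s 0 x = 1 := by
  simp [esOn, Finset.powersetCard_zero]

lemma esOn_newton {n : ℕ} (s : Finset (Fin n)) (x : Fin n → ℝ) (k : ℕ) (hk : 1 ≤ k) :
    esOn s (k+1) x * esOn s (k-1) x ≤ esOn s k x ^ 2 := by
  have h := multiset_newton (s.val.map x) k hk
  rwa [Finset.esymm_map_val, Finset.esymm_map_val, Finset.esymm_map_val] at h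

lemma esOn_insert {n : ℕ} (i : Fin n) (s : Finset (Fin n)) (hi : i ∉ s) (m : ℕ) (x : Fin n → ℝ) :
    esOn (insert i s) (m+1) x = esOn s (m+1) x + x i * esOn s m x := by
  unfold esOn
  rw [Finset.powersetCard_succ_insert hi]
  rw [Finset.sum_union]
  · congr 1
    rw [Finset.sum_image, Finset.mul_sum]
    · apply Finset.sum_congr rfl
      intro T hT
      have hiT : i ∉ T := by
        intro hmem
        exact hi ((Finset.mem_powersetCard.mp hT).1 hmem)
      rw [Finset.prod_insert hiT]
    · intro T hT U hU hTU
      have hiT : i ∉ T := fun hmem => hi ((Finset.mem_powersetCard.mp hT).1 hmem)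
      have hiU : i ∉ U := fun hmem => hi ((Finset.mem_powersetCard.mp hU).1 hmem)
      have := congrArg (Finset.erase · i) hTU
      simpa [Finset.erase_insert hiT, Finset.erase_insert hiU] using this
  · rw [Finset.disjoint_left]
    intro T hT hT'
    obtain ⟨U, hU, rfl⟩ := Finset.mem_image.mp hT'
    exact hi ((Finset.mem_powersetCard.mp hT).1 (Finset.mem_insert_self i U))

lemma esymm_decomp {n : ℕ} (i : Fin n) (m : ℕ) (x : Fin n → ℝ) :
    esymm n (m+1) x = esOn (univ.erase i) (m+1) x + x i * esOn (univ.erase i) m x := by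
  rw [esymm_eq_esOn]
  conv_lhs => rw [show (univ : Finset (Fin n)) = insert i (univ.erase i) from
    (Finset.insert_erase (mem_univ i)).symm]
  exact esOn_insert i _ (notMem_erase i _) m x

lemma esOn_def {n : ℕ} (s : Finset (Fin n)) (m : ℕ) (x : Fin n → ℝ) :
    esOn s m x = ∑ T ∈ s.powersetCard m, ∏ i ∈ T, x i := rfl

lemma card_filter_supersets {n : ℕ} (s W : Finset (Fin n)) (hW : W ⊆ s) (q : ℕ)
    (hq : W.card ≤ q) :
    ((s.powersetCard q).filter fun T => W ⊆ T).card = (s.card - W.card).choose (q - W.card) := by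
  rw [← Finset.card_sdiff_of_subset hW, ← Finset.card_powersetCard]
  apply Finset.card_bij' (fun T _ => T \ W) (fun V _ => V ∪ W)
  · intro T hT
    obtain ⟨hT1, hT2⟩ := Finset.mem_powersetCard.mp (Finset.mem_filter.mp hT).1
    have hWT : W ⊆ T := (Finset.mem_filter.mp hT).2
    rw [Finset.mem_powersetCard]
    constructor
    · exact Finset.sdiff_subset_sdiff hT1 le_rfl
    · rw [Finset.card_sdiff_of_subset hWT, hT2]
  · intro V hV
    obtain ⟨hV1, hV2⟩ := Finset.mem_powersetCard.mp hV
    have hdisj : Disjoint V W := by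
      rw [Finset.disjoint_left]
      intro a haV haW
      exact (Finset.mem_sdiff.mp (hV1 haV)).2 haW
    rw [Finset.mem_filter, Finset.mem_powersetCard]
    refine ⟨⟨?_, ?_⟩, Finset.subset_union_right⟩
    · apply Finset.union_subset
      · exact hV1.trans Finset.sdiff_subset
      · exact hW
    · rw [Finset.card_union_of_disjoint hdisj, hV2]
      omega
  · intro T hT
    exact Finset.sdiff_union_of_subset (Finset.mem_filter.mp hT).2
  · intro V hV
    have hV1 := (Finset.mem_powersetCard.mp hV).1
    have hdisj : Disjoint V W := by
      rw [Finset.disjoint_left]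
      intro a haV haW
      exact (Finset.mem_sdiff.mp (hV1 haV)).2 haW
    exact Finset.union_sdiff_cancel_right hdisj

lemma filter_supersets_empty {n : ℕ} (s W : Finset (Fin n)) (q : ℕ) (hq : q < W.card) :
    ((s.powersetCard q).filter fun T => W ⊆ T) = ∅ := by
  rw [Finset.filter_eq_empty_iff]
  intro T hT hWT
  have := Finset.card_le_card hWT
  rw [(Finset.mem_powersetCard.mp hT).2] at this
  omega

lemma esOn_shift {n : ℕ} (s : Finset (Fin n)) (x : Fin n → ℝ) (u : ℝ) (q : ℕ) (hq : q ≤ s.card) :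
    esOn s q (fun i => x i + u) =
      ∑ j ∈ Finset.range (q+1), esOn s j x * ((s.card - j).choose (q - j)) * u^(q-j) := by
  unfold esOn
  have step1 : ∑ T ∈ s.powersetCard q, ∏ i ∈ T, (x i + u)
      = ∑ T ∈ s.powersetCard q, ∑ W ∈ T.powerset, (∏ i ∈ W, x i) * u^(q - W.card) := by
    apply Finset.sum_congr rfl
    intro T hT
    obtain ⟨hTs, hTc⟩ := Finset.mem_powersetCard.mp hT
    rw [Finset.prod_add]
    apply Finset.sum_congr rfl
    intro W hW
    have hWT := Finset.mem_powerset.mp hW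
    rw [Finset.prod_const, Finset.card_sdiff_of_subset hWT, hTc]
  have step2 : ∑ T ∈ s.powersetCard q, ∑ W ∈ T.powerset, (∏ i ∈ W, x i) * u^(q - W.card)
      = ∑ W ∈ s.powerset, ∑ T ∈ (s.powersetCard q).filter (fun T => W ⊆ T),
          (∏ i ∈ W, x i) * u^(q - W.card) := by
    apply Finset.sum_comm'
    intro T W
    simp only [Finset.mem_powersetCard, Finset.mem_powerset, Finset.mem_filter]
    constructor
    · rintro ⟨⟨h1, h2⟩, h3⟩
      exact ⟨⟨⟨h1, h2⟩, h3⟩, h3.trans h1⟩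
    · rintro ⟨⟨⟨h1, h2⟩, h3⟩, _⟩
      exact ⟨⟨h1, h2⟩, h3⟩
  have step3 : ∑ W ∈ s.powerset, ∑ T ∈ (s.powersetCard q).filter (fun T => W ⊆ T),
          (∏ i ∈ W, x i) * u^(q - W.card)
      = ∑ j ∈ Finset.range (s.card + 1), ∑ W ∈ s.powersetCard j,
          (((s.powersetCard q).filter (fun T => W ⊆ T)).card : ℝ)
            * ((∏ i ∈ W, x i) * u^(q - W.card)) := by
    rw [Finset.sum_powerset]
    apply Finset.sum_congr rfl
    intro j _
    apply Finset.sum_congr rfl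
    intro W _
    rw [Finset.sum_const, nsmul_eq_mul]
  rw [step1, step2, step3]
  rw [← Finset.sum_subset (Finset.range_subset_range.mpr (by omega : q + 1 ≤ s.card + 1))]
  · apply Finset.sum_congr rfl
    intro j hj
    have hjq : j ≤ q := by
      have := Finset.mem_range.mp hj
      omega
    rw [Finset.sum_mul, Finset.sum_mul]
    apply Finset.sum_congr rfl
    intro W hW
    obtain ⟨hWs, hWc⟩ := Finset.mem_powersetCard.mp hW
    rw [card_filter_supersets s W hWs q (by omega), hWc]
    ring
  · intro j hj hjq
    simp only [Finset.mem_range] at hj hjq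
    apply Finset.sum_eq_zero
    intro W hW
    obtain ⟨hWs, hWc⟩ := Finset.mem_powersetCard.mp hW
    rw [filter_supersets_empty s W q (by omega)]
    simp

lemma esymm_shift_pos {n : ℕ} (x : Fin n → ℝ) (u : ℝ) (hu : 0 ≤ u) (l : ℕ)
    (hl1 : 1 ≤ l) (hl : l ≤ n)
    (hx : ∀ j, 1 ≤ j → j ≤ l → 0 < esymm n j x) :
    0 < esymm n l (fun i => x i + u) := by
  rw [esymm_eq_esOn, esOn_shift univ x u l (by simpa [Finset.card_univ] using hl)]
  apply Finset.sum_pos'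
  · intro j hj
    have hjl : j ≤ l := by
      have := Finset.mem_range.mp hj
      omega
    rcases Nat.eq_zero_or_pos j with rfl | hj1
    · rw [esOn_zero]
      positivity
    · have := hx j hj1 hjl
      rw [esymm_eq_esOn] at this
      positivity
  · refine ⟨l, Finset.mem_range.mpr (by omega), ?_⟩
    have h1 := hx l hl1 le_rfl
    rw [esymm_eq_esOn] at h1
    simp only [Nat.sub_self, Nat.choose_zero_right, pow_zero, Nat.cast_one, mul_one]
    exact h1

lemma cone_lemma {n : ℕ} (i : Fin n) :
    ∀ q : ℕ, q + 1 ≤ n → ∀ x : Fin n → ℝ,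
      (∀ l, 1 ≤ l → l ≤ q + 1 → 0 < esymm n l x) →
      ∀ m, m ≤ q → 0 < esOn (univ.erase i) m x := by
  intro q
  induction q with
  | zero =>
      intro _ x _ m hm
      interval_cases m
      rw [esOn_zero]
      norm_num
  | succ q ih =>
      intro hqn x hx m hm
      rcases Nat.lt_or_ge m (q+1) with hmq | hmq
      · exact ih (by omega) x (fun l h1 h2 => hx l h1 (by omega)) m (by omega)
      · have hm' : m = q + 1 := by omega
        subst hm'
        by_contra hneg
        push_neg at hneg
        set U : ℝ := 1 + ∑ p, |x p| with hU
        have hU0 : (0:ℝ) ≤ U := by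
          rw [hU]
          positivity
        have hcard : (univ.erase i).card = n - 1 := by
          rw [Finset.card_erase_of_mem (mem_univ i), Finset.card_univ, Fintype.card_fin]
        have hbig : 0 < esOn (univ.erase i) (q+1) (fun p => x p + U) := by
          rw [esOn_def]
          apply Finset.sum_pos
          · intro T hT
            apply Finset.prod_pos
            intro p hp
            have h1 : |x p| ≤ ∑ p, |x p| :=
              Finset.single_le_sum (fun r _ => abs_nonneg (x r)) (mem_univ p)
            have h2 : -x p ≤ |x p| := neg_le_abs (x p)
            rw [hU]
            linarith
          · rw [← Finset.card_pos, Finset.card_powersetCard, hcard]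
            exact Nat.choose_pos (by omega)
        have hcont : ContinuousOn
            (fun u : ℝ => esOn (univ.erase i) (q+1) (fun p => x p + u)) (Set.Icc 0 U) := by
          apply Continuous.continuousOn
          simp only [esOn_def]
          exact continuous_finset_sum _ fun T _ =>
            continuous_finset_prod _ fun p _ => (continuous_const.add continuous_id)
        have hIvt := intermediate_value_Icc hU0 hcont
        have h0mem : (0:ℝ) ∈ Set.Icc (esOn (univ.erase i) (q+1) (fun p => x p + 0))
            (esOn (univ.erase i) (q+1) (fun p => x p + U)) := by
          constructor
          · simpa using hneg
          · exact le_of_lt hbig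
        obtain ⟨u₀, hu₀mem, hu₀⟩ := hIvt h0mem
        set z : Fin n → ℝ := fun p => x p + u₀ with hz
        have hz_sym : ∀ l, 1 ≤ l → l ≤ q+2 → 0 < esymm n l z := by
          intro l h1 h2
          exact esymm_shift_pos x u₀ hu₀mem.1 l h1 (by omega)
            (fun j hj1 hj2 => hx j hj1 (by omega))
        have hzq : ∀ m', m' ≤ q → 0 < esOn (univ.erase i) m' z :=
          ih (by omega) z (fun l h1 h2 => hz_sym l h1 (by omega))
        have hN := esOn_newton (univ.erase i) z (q+1) (by omega)
        rw [show q + 1 + 1 = q + 2 from rfl, show q + 1 - 1 = q from rfl] at hN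
        have hzero : esOn (univ.erase i) (q+1) z = 0 := hu₀
        rw [hzero] at hN
        have hE2 : esOn (univ.erase i) (q+2) z = esymm n (q+2) z := by
          have hdec := esymm_decomp i (q+1) z
          rw [hzero] at hdec
          rw [hdec]
          ring
        nlinarith [hz_sym (q+2) (by omega) (by omega), hzq q le_rfl, hN, hE2]

lemma swap_sum {n : ℕ} (μ w : Fin n → ℝ) (m : ℕ) (hm : 1 ≤ m) :
    ∑ T ∈ (univ : Finset (Fin n)).powersetCard m, ∑ i ∈ T, (∏ l ∈ T.erase i, μ l) * w i
      = ∑ i : Fin n, w i * esOn (univ.erase i) (m-1) μ := by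
  have hrhs : ∀ i : Fin n, w i * esOn (univ.erase i) (m-1) μ
      = ∑ W ∈ (univ.erase i).powersetCard (m-1), (∏ l ∈ W, μ l) * w i := by
    intro i
    rw [esOn_def, Finset.mul_sum]
    apply Finset.sum_congr rfl
    intro W _
    ring
  simp only [hrhs]
  rw [Finset.sum_sigma', Finset.sum_sigma']
  apply Finset.sum_nbij' (fun p => (⟨p.2, p.1.erase p.2⟩ : Σ _ : Fin n, Finset (Fin n)))
    (fun p => (⟨insert p.1 p.2, p.1⟩ : Σ _ : Finset (Fin n), Fin n))
  · rintro ⟨T, i⟩ hp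
    simp only [Finset.mem_sigma, Finset.mem_powersetCard] at hp ⊢
    obtain ⟨⟨hT1, hT2⟩, hiT⟩ := hp
    refine ⟨mem_univ _, ?_, ?_⟩
    · intro a ha
      have := Finset.mem_erase.mp ha
      exact Finset.mem_erase.mpr ⟨this.1, mem_univ a⟩
    · rw [Finset.card_erase_of_mem hiT, hT2]
  · rintro ⟨i, W⟩ hp
    simp only [Finset.mem_sigma, Finset.mem_powersetCard] at hp ⊢
    obtain ⟨_, hW1, hW2⟩ := hp
    have hiW : i ∉ W := by
      intro hmem
      exact (Finset.mem_erase.mp (hW1 hmem)).1 rfl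
    refine ⟨⟨?_, ?_⟩, Finset.mem_insert_self i W⟩
    · intro a _
      exact mem_univ a
    · rw [Finset.card_insert_of_notMem hiW, hW2]
      omega
  · rintro ⟨T, i⟩ hp
    simp only [Finset.mem_sigma, Finset.mem_powersetCard] at hp
    have hiT := hp.2
    simp only [Sigma.mk.inj_iff, heq_eq_eq]
    exact ⟨Finset.insert_erase hiT, trivial⟩
  · rintro ⟨i, W⟩ hp
    simp only [Finset.mem_sigma, Finset.mem_powersetCard] at hp
    obtain ⟨_, hW1, _⟩ := hp
    have hiW : i ∉ W := by
      intro hmem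
      exact (Finset.mem_erase.mp (hW1 hmem)).1 rfl
    simp only [Sigma.mk.inj_iff, heq_eq_eq]
    exact ⟨trivial, Finset.erase_insert hiW⟩
  · rintro ⟨T, i⟩ _
    rfl

lemma hasDerivAt_esymm_line {n : ℕ} (μ w : Fin n → ℝ) (m : ℕ) (hm : 1 ≤ m) (s₀ : ℝ) :
    HasDerivAt (fun s => esymm n m (fun i => μ i + (s - s₀) * w i))
      (∑ i, w i * esOn (univ.erase i) (m-1) μ) s₀ := by
  have h1 : ∀ T ∈ (univ : Finset (Fin n)).powersetCard m,
      HasDerivAt (fun s => ∏ i ∈ T, (μ i + (s - s₀) * w i))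
        (∑ i ∈ T, (∏ l ∈ T.erase i, μ l) * w i) s₀ := by
    intro T _
    have hf : ∀ i ∈ T, HasDerivAt (fun s => μ i + (s - s₀) * w i) (w i) s₀ := by
      intro i _
      simpa using (((hasDerivAt_id s₀).sub_const s₀).mul_const (w i)).const_add (μ i)
    have := HasDerivAt.finset_prod hf
    simp only [sub_self, zero_mul, add_zero, smul_eq_mul] at this
    exact this.congr_of_eventuallyEq (Filter.Eventually.of_forall fun s => by simp [Finset.prod_apply])
  have h2 := HasDerivAt.sum h1
  rw [swap_sum μ w m hm] at h2
  exact h2.congr_of_eventuallyEq (Filter.Eventually.of_forall fun s => by simp [Finset.sum_apply, esymm])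

end NewtonAux

open NewtonAux in
/-- Ellipticity of the operator G. -/
theorem operator_elliptic (n k : ℕ) (hn : 3 ≤ n) (hk : 3 ≤ k) (hkn : k ≤ n)
    (t h : ℝ) (ht0 : 0 < t) (ht1 : t ≤ 1) (hh : 0 < h)
    (η : Fin n → ℝ)
    (hη : (fun i => t * η i + (1 - t) * ∑ p, η p) ∈ Gamma n (k - 1)) :
    ∀ j : Fin n,
      0 < pdv n j (fun ξ =>
          esymm n k (fun i => t * ξ i + (1 - t) * ∑ p, ξ p) /
            esymm n (k - 1) (fun i => t * ξ i + (1 - t) * ∑ p, ξ p) -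
          h / esymm n (k - 1) (fun i => t * ξ i + (1 - t) * ∑ p, ξ p)) η := by
  intro j
  set T0 : ℝ := ∑ p, η p with hT0
  set μ : Fin n → ℝ := fun i => t * η i + (1 - t) * T0 with hμ
  set w : Fin n → ℝ := fun i => if i = j then 1 else 1 - t with hw
  have hη' : ∀ l, 1 ≤ l → l ≤ k - 1 → 0 < esymm n l μ := hη
  have hvfun : ∀ s : ℝ,
      (fun i => t * Function.update η j s i + (1 - t) * ∑ p, Function.update η j s p)
      = fun i => μ i + (s - η j) * w i := by
    intro s
    funext i
    have hsum : ∑ p, Function.update η j s p = T0 + (s - η j) := by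
      rw [Finset.sum_update_of_mem (mem_univ j)]
      have hrest : ∑ x ∈ univ \ {j}, η x = T0 - η j := by
        rw [Finset.sum_sdiff_eq_sub (Finset.subset_univ {j}), Finset.sum_singleton, hT0]
      rw [hrest]
      ring
    rw [hsum, Function.update_apply]
    rw [hμ, hw]
    by_cases hij : i = j
    · subst hij
      simp only [eq_self_iff_true, if_true]
      ring
    · simp only [if_neg hij]
      ring
  -- derivative facts
  have hA := hasDerivAt_esymm_line μ w k (by omega) (η j)
  have hB := hasDerivAt_esymm_line μ w (k-1) (by omega) (η j)
  have hv : (fun i : Fin n => μ i + (η j - η j) * w i) = μ := by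
    funext i
    ring
  have hBpos : 0 < esymm n (k-1) μ := hη' (k-1) (by omega) le_rfl
  have hBne : esymm n (k-1) (fun i : Fin n => μ i + (η j - η j) * w i) ≠ 0 := by
    rw [hv]
    exact ne_of_gt hBpos
  have hD := (hA.div hB hBne).sub ((hasDerivAt_const (η j) h).div hB hBne)
  simp only [hv] at hD
  -- rewrite the goal
  unfold pdv
  have hfun_eq : (fun s => (fun ξ : Fin n → ℝ =>
          esymm n k (fun i => t * ξ i + (1 - t) * ∑ p, ξ p) /
            esymm n (k - 1) (fun i => t * ξ i + (1 - t) * ∑ p, ξ p) -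
          h / esymm n (k - 1) (fun i => t * ξ i + (1 - t) * ∑ p, ξ p)) (Function.update η j s))
      = fun s => esymm n k (fun i => μ i + (s - η j) * w i) /
            esymm n (k - 1) (fun i => μ i + (s - η j) * w i) -
          h / esymm n (k - 1) (fun i => μ i + (s - η j) * w i) := by
    funext s
    simp only []
    rw [hvfun s]
  rw [hfun_eq]
  simp only [Pi.div_def, Pi.sub_def] at hD
  rw [hD.deriv]
  -- positivity
  set A := esymm n k μ with hA0
  set B := esymm n (k-1) μ with hB0
  set A' := ∑ i, w i * esOn (univ.erase i) (k-1) μ with hA'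
  set B' := ∑ i, w i * esOn (univ.erase i) (k-1-1) μ with hB'
  have hrw : (A' * B - A * B') / B ^ 2 - (0 * B - h * B') / B ^ 2
      = (A' * B - A * B' + h * B') / B ^ 2 := by
    ring
  rw [hrw]
  apply div_pos _ (by positivity)
  have hnum : A' * B - A * B' + h * B'
      = ∑ i, w i * (esOn (univ.erase i) (k-1) μ * B
          - (A - h) * esOn (univ.erase i) (k-1-1) μ) := by
    rw [hA', hB', Finset.sum_mul, Finset.mul_sum, Finset.mul_sum, ← Finset.sum_sub_distrib,
      ← Finset.sum_add_distrib]
    apply Finset.sum_congr rfl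
    intro i _
    ring
  rw [hnum]
  have hbracket : ∀ i : Fin n, h * esOn (univ.erase i) (k-1-1) μ
      ≤ esOn (univ.erase i) (k-1) μ * B - (A - h) * esOn (univ.erase i) (k-1-1) μ := by
    intro i
    have hdecA := esymm_decomp i (k-1) μ
    rw [show k-1+1 = k from by omega] at hdecA
    have hdecB := esymm_decomp i (k-2) μ
    rw [show k-2+1 = k-1 from by omega] at hdecB
    have hnewt := esOn_newton (univ.erase i) μ (k-1) (by omega)
    rw [show k-1+1 = k from by omega] at hnewt
    rw [show k-1-1 = k-2 from by omega, ← hA0, ← hB0] at *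
    rw [hdecA, hdecB]
    nlinarith [hnewt]
  have hMpos : ∀ i : Fin n, 0 < esOn (univ.erase i) (k-1-1) μ := by
    intro i
    rw [show k-1-1 = k-2 from by omega]
    exact cone_lemma i (k-2) (by omega) μ
      (fun l h1 h2 => hη' l h1 (by omega)) (k-2) le_rfl
  apply Finset.sum_pos'
  · intro i _
    apply mul_nonneg
    · rw [hw]
      by_cases hij : i = j
      · simp [hij]
      · simp [hij]
        linarith
    · have := hbracket i
      have := hMpos i
      nlinarith
  · refine ⟨j, mem_univ j, ?_⟩
    have hwj : w j = 1 := by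
      rw [hw]
      simp
    rw [hwj, one_mul]
    have := hbracket j
    have := hMpos j
    nlinarith
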